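/- Let H be a real m×n matrix, A a real n×n matrix, B a real n×n_w matrix, η_w > 0 a real number, and M a real m×m matrix whose off-diagonal entries are all nonnegative, such that H A = M H and M 1 = −η_w · ŵ_H, where ŵ_H is the column vector whose j-th entry is |Bᵀ(H^j)ᵀ|₁ (H^j the j-th row of H). Then for every index j ∈ {1, …, m} and every x ∈ ℝⁿ with H x ≤ 1 componentwise and H^j x = 1, it holds that H^j A x ≤ −η_w · |Bᵀ(H^j)ᵀ|₁. -/
import Mathlib


open Matrix

/-- Flow condition (10b): if `offdiag(M) ≥ 0`, `HA = MH`, and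
`M1 = −η_w ŵ_H` (where `ŵ_H` has entries `|Bᵀ(H^j)ᵀ|₁`), then on the face
`{x : Hx ≤ 1, H^j x = 1}` of the polyhedron `{x : Hx ≤ 1}` one has
`H^j A x ≤ −η_w |Bᵀ(H^j)ᵀ|₁`. -/
theorem flow_condition {m n nw : ℕ} (H : Matrix (Fin m) (Fin n) ℝ)
    (A : Matrix (Fin n) (Fin n) ℝ) (B : Matrix (Fin n) (Fin nw) ℝ)
    (ηw : ℝ) (hηw : 0 < ηw)
    (M : Matrix (Fin m) (Fin m) ℝ)
    (hM : ∀ a b, a ≠ b → 0 ≤ M a b)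
    (hHA : H * A = M * H)
    (hM1 : ∀ j, (∑ a, M j a) = -(ηw * ∑ l, |(H * B) j l|))
    (j : Fin m) (x : Fin n → ℝ)
    (hx : ∀ i, H.mulVec x i ≤ 1) (hxj : H.mulVec x j = 1) :
    (H * A).mulVec x j ≤ -(ηw * ∑ l, |(H * B) j l|) := by
  rw [hHA, ← hM1 j, ← mulVec_mulVec]
  simp only [mulVec, dotProduct]
  apply Finset.sum_le_sum
  intro a _
  rcases eq_or_ne a j with rfl | h
  · simp only [mulVec, dotProduct] at hxj; rw [hxj]; simp
  · calc M j a * H.mulVec x a ≤ M j a * 1 :=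
        mul_le_mul_of_nonneg_left (hx a) (hM j a (Ne.symm h))
    _ = M j a := mul_one _
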